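/- Fix real numbers β > −1 and M, and an integer n ≥ 1; assume that M ≠ (3+β)(1+β)/(m(m+1+β)) for even m ∈ {n−1,n,n+1} and M ≠ (3+β)(1+β)/((m+1)(m+β)) for odd m ∈ {n−1,n,n+1} as needed so that all denominators below are nonzero. For ε ∈ ℝ, ε ≠ 0, set q = −e^{ε}, b = −e^{βε}, and let Φ_m = (−1)^m q^{m(m−1)/2} ((q^3;q)_m/(bq^{m+3};q)_m) ( M − q^{2m} (1−bq^3)(bq;q)_2 (q;q)_2 / ((1−q^2)(q^{m+1};q)_2 (bq^{m+1};q)_2) ) and B_n = Φ_n/Φ_{n−1}. Then, as ε → 0 (ε ≠ 0), B_n tends to ((n+2)/(2n+1+β)) · ( M − (3+β)(1+β)/((n+2)(n+1+β)) ) / ( M − (3+β)(1+β)/(n(n+1+β)) ) if n is even, and to −((n+2+β)/(2n+1+β)) · ( M − (3+β)(1+β)/((n+1)(n+2+β)) ) / ( M − (3+β)(1+β)/((n+1)(n+β)) ) if n is odd. -/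

import Mathlib

/-- The q-shifted factorial `(a;q)_n = ∏_{k=0}^{n-1} (1 - a q^k)`. -/
noncomputable def qPoch (q a : ℝ) (n : ℕ) : ℝ :=
  ∏ k ∈ Finset.range n, (1 - a * q ^ k)

open Filter Real

set_option maxHeartbeats 1000000

local notation "l" => nhdsWithin (0:ℝ) ({0}ᶜ : Set ℝ)

/-! ### basic tendsto atoms -/

lemma TSc (c : ℝ) : Tendsto (fun ε:ℝ => (1 - Real.exp (c*ε))/ε) l (nhds (-c)) := by
  have h : HasDerivAt (fun ε:ℝ => 1 - Real.exp (c*ε)) (-c) 0 := by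
    have := ((hasDerivAt_id (0:ℝ)).const_mul c).exp
    simpa using (this.const_sub 1)
  refine (hasDerivAt_iff_tendsto_slope.mp h).congr (fun ε => ?_)
  simp [slope_def_field]

lemma TA (k : ℕ) : Tendsto (fun ε:ℝ => Real.exp ε ^ k) l (nhds 1) := by
  have : Tendsto (fun ε:ℝ => Real.exp ε ^ k) (nhds 0) (nhds 1) := by
    have := ((Real.continuous_exp.tendsto 0).pow k)
    simpa using this
  exact this.mono_left nhdsWithin_le_nhds

lemma TB (β : ℝ) (k : ℕ) : Tendsto (fun ε:ℝ => Real.exp (β*ε) * Real.exp ε ^ k) l (nhds 1) := by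
  have h1 : Tendsto (fun ε:ℝ => Real.exp (β*ε)) (nhds 0) (nhds 1) := by
    have h2 : Continuous fun ε:ℝ => β * ε := by continuity
    have h3 := (Real.continuous_exp.comp h2).tendsto 0
    simp only [Function.comp_def, mul_zero, Real.exp_zero] at h3
    exact h3
  have := (h1.mono_left nhdsWithin_le_nhds).mul (TA k)
  simpa using this

lemma TSq (k : ℕ) : Tendsto (fun ε:ℝ => (1 - Real.exp ε ^ k)/ε) l (nhds (-(k:ℝ))) := by
  refine (TSc (k:ℝ)).congr (fun ε => ?_)
  rw [← Real.exp_nat_mul]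

lemma TSb (β : ℝ) (k : ℕ) :
    Tendsto (fun ε:ℝ => (1 - Real.exp (β*ε) * Real.exp ε ^ k)/ε) l (nhds (-(β+(k:ℝ)))) := by
  refine (TSc (β+(k:ℝ))).congr (fun ε => ?_)
  rw [add_mul, Real.exp_add, ← Real.exp_nat_mul]

/-! ### qPoch lemmas -/

lemma qPoch_two (q a : ℝ) : qPoch q a 2 = (1 - a) * (1 - a * q) := by
  simp [qPoch, Finset.prod_range_succ]

lemma qPoch_succ (q a : ℝ) (n : ℕ) : qPoch q a (n+1) = qPoch q a n * (1 - a * q ^ n) :=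
  Finset.prod_range_succ _ _

lemma qPoch_succ' (q a : ℝ) (n : ℕ) : qPoch q a (n+1) = (1 - a) * qPoch q (a*q) n := by
  rw [qPoch, Finset.prod_range_succ', pow_zero, mul_one, mul_comm, qPoch]
  congr 1
  exact Finset.prod_congr rfl (fun k _ => by ring_nf)

lemma qPoch_shift (q b : ℝ) (n : ℕ) :
    (1 - b * q ^ (n+3)) * qPoch q (b * q ^ (n+4)) (n+1)
      = qPoch q (b * q ^ (n+3)) n * (1 - b * q ^ (n+3) * q ^ n)
          * (1 - b * q ^ (n+3) * q ^ (n+1)) := by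
  have h1 : qPoch q (b * q^(n+3)) (n+2) = (1 - b*q^(n+3)) * qPoch q (b*q^(n+3)*q) (n+1) :=
    qPoch_succ' _ _ _
  have h2 : qPoch q (b * q^(n+3)) (n+2)
      = qPoch q (b*q^(n+3)) n * (1 - b*q^(n+3)*q^n) * (1 - b*q^(n+3)*q^(n+1)) := by
    rw [show n+2 = (n+1)+1 from rfl, qPoch_succ, qPoch_succ]
  rw [show b*q^(n+4) = b*q^(n+3)*q from by ring]
  rw [← h1, h2]

lemma one_sub_ne {a : ℝ} (h : |a| ≠ 1) : 1 - a ≠ 0 := by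
  intro hc
  exact h (by rw [show a = 1 by linarith]; simp)

lemma qPoch_ne_zero {q a : ℝ} {n : ℕ} (h : ∀ k < n, 1 - a * q ^ k ≠ 0) : qPoch q a n ≠ 0 := by
  rw [qPoch, Finset.prod_ne_zero_iff]
  intro k hk
  exact h k (Finset.mem_range.mp hk)

lemma pow_exp_ne_one {ε : ℝ} (hε : ε ≠ 0) {j : ℕ} (hj : j ≠ 0) : Real.exp ε ^ j ≠ 1 := by
  rw [← Real.exp_nat_mul, Ne, Real.exp_eq_one_iff]
  exact mul_ne_zero (Nat.cast_ne_zero.mpr hj) hε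

lemma exp_pow_ne_one {β ε : ℝ} (hβ : -1 < β) (hε : ε ≠ 0) {j : ℕ} (hj : j ≠ 0) :
    Real.exp (β*ε) * Real.exp ε ^ j ≠ 1 := by
  rw [← Real.exp_nat_mul, ← Real.exp_add, Ne, Real.exp_eq_one_iff]
  have h1 : (1:ℝ) ≤ (j:ℝ) := by exact_mod_cast Nat.one_le_iff_ne_zero.mpr hj
  have hk : (0:ℝ) < β + j := by linarith
  intro hc
  exact (mul_ne_zero hk.ne' hε) (by rw [add_mul]; exact hc)


lemma T1A (k : ℕ) : Tendsto (fun ε:ℝ => 1 + Real.exp ε ^ k) l (nhds 2) := by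
  have h : Tendsto (fun ε:ℝ => (1:ℝ) + Real.exp ε ^ k) l (nhds (1+1)) :=
    Tendsto.add tendsto_const_nhds (TA k)
  convert h using 2; norm_num

lemma T1B (β : ℝ) (k : ℕ) :
    Tendsto (fun ε:ℝ => 1 + Real.exp (β*ε) * Real.exp ε ^ k) l (nhds 2) := by
  have h : Tendsto (fun ε:ℝ => (1:ℝ) + Real.exp (β*ε) * Real.exp ε ^ k) l (nhds (1+1)) :=
    Tendsto.add tendsto_const_nhds (TB β k)
  convert h using 2; norm_num

/-! ### the Geronimus datum -/

noncomputable def Phi (β M : ℝ) (j : ℕ) (ε : ℝ) : ℝ :=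
  (-1) ^ j * (-Real.exp ε) ^ (j * (j - 1) / 2) *
    (qPoch (-Real.exp ε) ((-Real.exp ε) ^ 3) j /
      qPoch (-Real.exp ε) (-Real.exp (β * ε) * (-Real.exp ε) ^ (j + 3)) j) *
    (M - (-Real.exp ε) ^ (2 * j) * (1 - -Real.exp (β * ε) * (-Real.exp ε) ^ 3) *
        qPoch (-Real.exp ε) (-Real.exp (β * ε) * -Real.exp ε) 2 *
        qPoch (-Real.exp ε) (-Real.exp ε) 2 /
      ((1 - (-Real.exp ε) ^ 2) * qPoch (-Real.exp ε) ((-Real.exp ε) ^ (j + 1)) 2 *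
        qPoch (-Real.exp ε) (-Real.exp (β * ε) * (-Real.exp ε) ^ (j + 1)) 2))

noncomputable def NAq (β : ℝ) (j : ℕ) (ε : ℝ) : ℝ :=
  Real.exp ε ^ (2*j) * (1 + Real.exp ε ^ 1) * ((1 - Real.exp (β*ε) * Real.exp ε ^ 1)/ε) *
    (1 + Real.exp (β*ε) * Real.exp ε ^ 2) * ((1 - Real.exp (β*ε) * Real.exp ε ^ 3)/ε)

noncomputable def D0o (β : ℝ) (m : ℕ) (ε : ℝ) : ℝ :=
  ((1 - Real.exp ε ^ (m+1))/ε) * (1 + Real.exp ε ^ (m+2)) *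
    (1 + Real.exp (β*ε) * Real.exp ε ^ (m+1)) * ((1 - Real.exp (β*ε) * Real.exp ε ^ (m+2))/ε)

noncomputable def D1o (β : ℝ) (m : ℕ) (ε : ℝ) : ℝ :=
  (1 + Real.exp ε ^ (m+2)) * ((1 - Real.exp ε ^ (m+3))/ε) *
    ((1 - Real.exp (β*ε) * Real.exp ε ^ (m+2))/ε) * (1 + Real.exp (β*ε) * Real.exp ε ^ (m+3))

noncomputable def D0e (β : ℝ) (m : ℕ) (ε : ℝ) : ℝ :=
  (1 + Real.exp ε ^ (m+1)) * ((1 - Real.exp ε ^ (m+2))/ε) *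
    ((1 - Real.exp (β*ε) * Real.exp ε ^ (m+1))/ε) * (1 + Real.exp (β*ε) * Real.exp ε ^ (m+2))

noncomputable def D1e (β : ℝ) (m : ℕ) (ε : ℝ) : ℝ :=
  ((1 - Real.exp ε ^ (m+2))/ε) * (1 + Real.exp ε ^ (m+3)) *
    (1 + Real.exp (β*ε) * Real.exp ε ^ (m+2)) * ((1 - Real.exp (β*ε) * Real.exp ε ^ (m+3))/ε)

lemma pointwise_odd (β M : ℝ) (hβ : -1 < β) (m : ℕ) (hm : Odd m) {ε : ℝ} (hε : ε ≠ 0)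
    (hP0 : M * D0o β m ε - NAq β m ε ≠ 0) :
    Phi β M (m+1) ε / Phi β M m ε =
      (Real.exp ε ^ m * ((1 - Real.exp ε ^ (m+3))/ε) *
        (1 + Real.exp (β*ε) * Real.exp ε ^ (m+3)) *
        (M * D1o β m ε - NAq β (m+1) ε) * D0o β m ε) /
      (((1 - Real.exp (β*ε) * Real.exp ε ^ (2*m+3))/ε) *
        (1 + Real.exp (β*ε) * Real.exp ε ^ (2*m+4)) * D1o β m ε *
        (M * D0o β m ε - NAq β m ε)) := by
  have hx : (0:ℝ) < Real.exp ε := Real.exp_pos ε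
  have hy : (0:ℝ) < Real.exp (β*ε) := Real.exp_pos _
  have hxk : ∀ k:ℕ, k ≠ 0 → (1:ℝ) - Real.exp ε ^ k ≠ 0 := fun k hk =>
    sub_ne_zero.mpr (Ne.symm (pow_exp_ne_one hε hk))
  have hyk : ∀ k:ℕ, k ≠ 0 → (1:ℝ) - Real.exp (β*ε) * Real.exp ε ^ k ≠ 0 := fun k hk =>
    sub_ne_zero.mpr (Ne.symm (exp_pow_ne_one hβ hε hk))
  have hpx : ∀ k:ℕ, (1:ℝ) + Real.exp ε ^ k ≠ 0 := fun k => by positivity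
  have hpy : ∀ k:ℕ, (1:ℝ) + Real.exp (β*ε) * Real.exp ε ^ k ≠ 0 := fun k => by positivity
  have hD0ne : D0o β m ε ≠ 0 := by
    unfold D0o
    exact mul_ne_zero (mul_ne_zero (mul_ne_zero
      (div_ne_zero (hxk (m+1) (by omega)) hε) (hpx (m+2))) (hpy (m+1)))
      (div_ne_zero (hyk (m+2) (by omega)) hε)
  have hD1ne : D1o β m ε ≠ 0 := by
    unfold D1o
    exact mul_ne_zero (mul_ne_zero (mul_ne_zero
      (hpx (m+2)) (div_ne_zero (hxk (m+3) (by omega)) hε))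
      (div_ne_zero (hyk (m+2) (by omega)) hε)) (hpy (m+3))
  have hem1 : Even (m+1) := Odd.add_one hm
  have hem3 : Even (m+3) := by obtain ⟨t, ht⟩ := hm; exact ⟨t+2, by omega⟩
  have hom2 : Odd (m+2) := by obtain ⟨t, ht⟩ := hm; exact ⟨t+1, by omega⟩
  have A1 : (-Real.exp ε)^(m+3) = Real.exp ε^(m+3) := hem3.neg_pow _
  have A2 : (-Real.exp ε)^m = -(Real.exp ε^m) := hm.neg_pow _
  have A3 : (-Real.exp ε)^(m+1) = Real.exp ε^(m+1) := hem1.neg_pow _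
  have A4 : (-Real.exp ε)^(m+2) = -(Real.exp ε^(m+2)) := hom2.neg_pow _
  have A5 : (-Real.exp ε)^(2*m) = Real.exp ε^(2*m) := (even_two_mul m).neg_pow _
  have A6 : (-Real.exp ε)^(2*(m+1)) = Real.exp ε^(2*(m+1)) := (even_two_mul (m+1)).neg_pow _
  have s1 : (-1:ℝ)^m = -1 := Odd.neg_one_pow hm
  have s2 : (-1:ℝ)^(m+1) = 1 := Even.neg_one_pow hem1
  have hQne : (-Real.exp ε)^(m*(m-1)/2) ≠ 0 := pow_ne_zero _ (neg_ne_zero.mpr hx.ne')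
  have hNne : qPoch (-Real.exp ε) ((-Real.exp ε)^3) m ≠ 0 := by
    apply qPoch_ne_zero; intro k hk
    apply one_sub_ne
    rw [← pow_add, abs_pow, abs_neg, abs_of_pos hx]
    exact pow_exp_ne_one hε (by omega)
  have hDne : qPoch (-Real.exp ε) (-Real.exp (β*ε) * (-Real.exp ε)^(m+3)) m ≠ 0 := by
    apply qPoch_ne_zero; intro k hk
    apply one_sub_ne
    rw [show (-Real.exp (β*ε) * (-Real.exp ε)^(m+3)) * (-Real.exp ε)^k
      = -(Real.exp (β*ε) * (-Real.exp ε)^(m+3+k)) from by rw [pow_add]; ring]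
    rw [abs_neg, abs_mul, abs_of_pos hy, abs_pow, abs_neg, abs_of_pos hx]
    exact exp_pow_ne_one hβ hε (by omega)
  have hNsucc : qPoch (-Real.exp ε) ((-Real.exp ε)^3) (m+1)
      = qPoch (-Real.exp ε) ((-Real.exp ε)^3) m * (1 - Real.exp ε^(m+3)) := by
    rw [qPoch_succ]; congr 1; rw [A2]; ring
  have hDsucc := qPoch_shift (-Real.exp ε) (-Real.exp (β*ε)) m
  have hD1eq : qPoch (-Real.exp ε) (-Real.exp (β*ε) * (-Real.exp ε)^(m+1+3)) (m+1)
      = qPoch (-Real.exp ε) (-Real.exp (β*ε) * (-Real.exp ε)^(m+3)) m *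
          (1 - Real.exp (β*ε) * Real.exp ε^(2*m+3)) *
          (1 + Real.exp (β*ε) * Real.exp ε^(2*m+4))
        / (1 + Real.exp (β*ε) * Real.exp ε^(m+3)) := by
    rw [show m+1+3 = m+4 from rfl]
    rw [eq_div_iff (hpy (m+3))]
    have e1 : (1:ℝ) - -Real.exp (β*ε) * (-Real.exp ε)^(m+3)
        = 1 + Real.exp (β*ε)*Real.exp ε^(m+3) := by rw [A1]; ring
    have e2 : (1:ℝ) - -Real.exp (β*ε) * (-Real.exp ε)^(m+3) * (-Real.exp ε)^m
        = 1 - Real.exp (β*ε)*Real.exp ε^(2*m+3) := by rw [A1, A2]; ring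
    have e3 : (1:ℝ) - -Real.exp (β*ε) * (-Real.exp ε)^(m+3) * (-Real.exp ε)^(m+1)
        = 1 + Real.exp (β*ε)*Real.exp ε^(2*m+4) := by rw [A1, A3]; ring
    rw [e1, e2, e3] at hDsucc
    linear_combination hDsucc
  have hQ : (-Real.exp ε)^((m+1)*(m+1-1)/2)
      = (-Real.exp ε)^(m*(m-1)/2) * (-(Real.exp ε^m)) := by
    rw [Nat.triangle_succ, pow_add, A2]
  have hAm : M - (-Real.exp ε) ^ (2 * m) * (1 - -Real.exp (β * ε) * (-Real.exp ε) ^ 3) *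
        qPoch (-Real.exp ε) (-Real.exp (β * ε) * -Real.exp ε) 2 *
        qPoch (-Real.exp ε) (-Real.exp ε) 2 /
      ((1 - (-Real.exp ε) ^ 2) * qPoch (-Real.exp ε) ((-Real.exp ε) ^ (m + 1)) 2 *
        qPoch (-Real.exp ε) (-Real.exp (β * ε) * (-Real.exp ε) ^ (m + 1)) 2)
      = (M * D0o β m ε - NAq β m ε) / D0o β m ε := by
    rw [qPoch_two, qPoch_two, qPoch_two, qPoch_two]
    unfold D0o NAq
    rw [A3, A5]
    have f1 : (1:ℝ) - Real.exp ε^(m+1) ≠ 0 := hxk (m+1) (by omega)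
    have f2 : (1:ℝ) - Real.exp ε^(m+1) * -Real.exp ε ≠ 0 := by
      rw [show (1:ℝ) - Real.exp ε^(m+1) * -Real.exp ε = 1 + Real.exp ε^(m+2) from by ring]
      exact hpx (m+2)
    have f3 : (1:ℝ) - -Real.exp (β*ε) * Real.exp ε^(m+1) ≠ 0 := by
      rw [show (1:ℝ) - -Real.exp (β*ε) * Real.exp ε^(m+1)
        = 1 + Real.exp (β*ε) * Real.exp ε^(m+1) from by ring]
      exact hpy (m+1)
    have f4 : (1:ℝ) - -Real.exp (β*ε) * Real.exp ε^(m+1) * -Real.exp ε ≠ 0 := by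
      rw [show (1:ℝ) - -Real.exp (β*ε) * Real.exp ε^(m+1) * -Real.exp ε
        = 1 - Real.exp (β*ε) * Real.exp ε^(m+2) from by ring]
      exact hyk (m+2) (by omega)
    have f5 : (1:ℝ) - (-Real.exp ε)^2 ≠ 0 := by
      rw [show (1:ℝ) - (-Real.exp ε)^2 = 1 - Real.exp ε^2 from by ring]
      exact hxk 2 (by omega)
    have Qne : (1 - (-Real.exp ε) ^ 2) * ((1 - Real.exp ε ^ (m + 1)) *
        (1 - Real.exp ε ^ (m + 1) * -Real.exp ε)) *
        ((1 - -Real.exp (β * ε) * Real.exp ε ^ (m + 1)) *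
        (1 - -Real.exp (β * ε) * Real.exp ε ^ (m + 1) * -Real.exp ε)) ≠ 0 :=
      mul_ne_zero (mul_ne_zero f5 (mul_ne_zero f1 f2)) (mul_ne_zero f3 f4)
    have D0ne : (1 - Real.exp ε ^ (m + 1)) / ε * (1 + Real.exp ε ^ (m + 2)) *
        (1 + Real.exp (β * ε) * Real.exp ε ^ (m + 1)) *
        ((1 - Real.exp (β * ε) * Real.exp ε ^ (m + 2)) / ε) ≠ 0 :=
      mul_ne_zero (mul_ne_zero (mul_ne_zero
        (div_ne_zero f1 hε) (hpx (m+2))) (hpy (m+1)))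
        (div_ne_zero (hyk (m+2) (by omega)) hε)
    rw [sub_div' Qne, div_eq_div_iff Qne D0ne]
    field_simp
    ring
  have hAm1 : M - (-Real.exp ε) ^ (2 * (m+1)) * (1 - -Real.exp (β * ε) * (-Real.exp ε) ^ 3) *
        qPoch (-Real.exp ε) (-Real.exp (β * ε) * -Real.exp ε) 2 *
        qPoch (-Real.exp ε) (-Real.exp ε) 2 /
      ((1 - (-Real.exp ε) ^ 2) * qPoch (-Real.exp ε) ((-Real.exp ε) ^ (m + 1 + 1)) 2 *
        qPoch (-Real.exp ε) (-Real.exp (β * ε) * (-Real.exp ε) ^ (m + 1 + 1)) 2)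
      = (M * D1o β m ε - NAq β (m+1) ε) / D1o β m ε := by
    rw [show m+1+1 = m+2 from rfl]
    rw [qPoch_two, qPoch_two, qPoch_two, qPoch_two]
    unfold D1o NAq
    rw [A4, A6]
    have f1 : (1:ℝ) - -(Real.exp ε^(m+2)) ≠ 0 := by
      rw [show (1:ℝ) - -(Real.exp ε^(m+2)) = 1 + Real.exp ε^(m+2) from by ring]
      exact hpx (m+2)
    have f2 : (1:ℝ) - -(Real.exp ε^(m+2)) * -Real.exp ε ≠ 0 := by
      rw [show (1:ℝ) - -(Real.exp ε^(m+2)) * -Real.exp ε = 1 - Real.exp ε^(m+3) from by ring]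
      exact hxk (m+3) (by omega)
    have f3 : (1:ℝ) - -Real.exp (β*ε) * -(Real.exp ε^(m+2)) ≠ 0 := by
      rw [show (1:ℝ) - -Real.exp (β*ε) * -(Real.exp ε^(m+2))
        = 1 - Real.exp (β*ε) * Real.exp ε^(m+2) from by ring]
      exact hyk (m+2) (by omega)
    have f4 : (1:ℝ) - -Real.exp (β*ε) * -(Real.exp ε^(m+2)) * -Real.exp ε ≠ 0 := by
      rw [show (1:ℝ) - -Real.exp (β*ε) * -(Real.exp ε^(m+2)) * -Real.exp ε
        = 1 + Real.exp (β*ε) * Real.exp ε^(m+3) from by ring]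
      exact hpy (m+3)
    have f5 : (1:ℝ) - (-Real.exp ε)^2 ≠ 0 := by
      rw [show (1:ℝ) - (-Real.exp ε)^2 = 1 - Real.exp ε^2 from by ring]
      exact hxk 2 (by omega)
    have Qne : (1 - (-Real.exp ε) ^ 2) * ((1 - -(Real.exp ε ^ (m + 2))) *
        (1 - -(Real.exp ε ^ (m + 2)) * -Real.exp ε)) *
        ((1 - -Real.exp (β * ε) * -(Real.exp ε ^ (m + 2))) *
        (1 - -Real.exp (β * ε) * -(Real.exp ε ^ (m + 2)) * -Real.exp ε)) ≠ 0 :=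
      mul_ne_zero (mul_ne_zero f5 (mul_ne_zero f1 f2)) (mul_ne_zero f3 f4)
    have D1ne : (1 + Real.exp ε ^ (m + 2)) * ((1 - Real.exp ε ^ (m + 3)) / ε) *
        ((1 - Real.exp (β * ε) * Real.exp ε ^ (m + 2)) / ε) *
        (1 + Real.exp (β * ε) * Real.exp ε ^ (m + 3)) ≠ 0 :=
      mul_ne_zero (mul_ne_zero (mul_ne_zero
        (hpx (m+2)) (div_ne_zero (hxk (m+3) (by omega)) hε))
        (div_ne_zero (hyk (m+2) (by omega)) hε)) (hpy (m+3))
    rw [sub_div' Qne, div_eq_div_iff Qne D1ne]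
    field_simp
    ring
  have hYne : ((1 - Real.exp (β*ε) * Real.exp ε ^ (2*m+3))/ε) *
      (1 + Real.exp (β*ε) * Real.exp ε ^ (2*m+4)) * D1o β m ε *
      (M * D0o β m ε - NAq β m ε) ≠ 0 :=
    mul_ne_zero (mul_ne_zero (mul_ne_zero
      (div_ne_zero (hyk (2*m+3) (by omega)) hε) (hpy (2*m+4))) hD1ne) hP0
  have hΦ0ne : Phi β M m ε ≠ 0 := by
    unfold Phi
    rw [hAm, s1]
    exact mul_ne_zero (mul_ne_zero (mul_ne_zero (neg_ne_zero.mpr one_ne_zero) hQne)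
      (div_ne_zero hNne hDne)) (div_ne_zero hP0 hD0ne)
  rw [div_eq_div_iff hΦ0ne hYne]
  unfold Phi
  rw [hNsucc, hD1eq, hQ, hAm, hAm1, s1, s2]
  have hDne' : qPoch (-Real.exp ε) (-(Real.exp (β*ε) * Real.exp ε^(m+3))) m ≠ 0 := by
    rw [show -(Real.exp (β*ε) * Real.exp ε^(m+3))
      = -Real.exp (β*ε) * (-Real.exp ε)^(m+3) from by rw [A1]; ring]
    exact hDne
  field_simp [hε, hpy (m+3), hD0ne, hD1ne, hDne]
  have hDn : qPoch (-Real.exp ε) (-(Real.exp (β*ε) * (-Real.exp ε)^(m+3))) m ≠ 0 := by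
    rw [neg_mul_eq_neg_mul]; exact hDne
  rw [neg_inj, div_eq_div_iff (mul_ne_zero hDn (hyk (2*m+3) (by omega))) hDn]
  ring

lemma pointwise_even (β M : ℝ) (hβ : -1 < β) (m : ℕ) (hm : Even m) {ε : ℝ} (hε : ε ≠ 0)
    (hP0 : M * D0e β m ε - NAq β m ε ≠ 0) :
    Phi β M (m+1) ε / Phi β M m ε =
      (-(Real.exp ε ^ m) * (1 + Real.exp ε ^ (m+3)) *
        ((1 - Real.exp (β*ε) * Real.exp ε ^ (m+3))/ε) *
        (M * D1e β m ε - NAq β (m+1) ε) * D0e β m ε) /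
      (((1 - Real.exp (β*ε) * Real.exp ε ^ (2*m+3))/ε) *
        (1 + Real.exp (β*ε) * Real.exp ε ^ (2*m+4)) * D1e β m ε *
        (M * D0e β m ε - NAq β m ε)) := by
  have hx : (0:ℝ) < Real.exp ε := Real.exp_pos ε
  have hy : (0:ℝ) < Real.exp (β*ε) := Real.exp_pos _
  have hxk : ∀ k:ℕ, k ≠ 0 → (1:ℝ) - Real.exp ε ^ k ≠ 0 := fun k hk =>
    sub_ne_zero.mpr (Ne.symm (pow_exp_ne_one hε hk))
  have hyk : ∀ k:ℕ, k ≠ 0 → (1:ℝ) - Real.exp (β*ε) * Real.exp ε ^ k ≠ 0 := fun k hk =>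
    sub_ne_zero.mpr (Ne.symm (exp_pow_ne_one hβ hε hk))
  have hpx : ∀ k:ℕ, (1:ℝ) + Real.exp ε ^ k ≠ 0 := fun k => by positivity
  have hpy : ∀ k:ℕ, (1:ℝ) + Real.exp (β*ε) * Real.exp ε ^ k ≠ 0 := fun k => by positivity
  have hD0ne : D0e β m ε ≠ 0 := by
    unfold D0e
    exact mul_ne_zero (mul_ne_zero (mul_ne_zero
      (hpx (m+1)) (div_ne_zero (hxk (m+2) (by omega)) hε))
      (div_ne_zero (hyk (m+1) (by omega)) hε)) (hpy (m+2))
  have hD1ne : D1e β m ε ≠ 0 := by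
    unfold D1e
    exact mul_ne_zero (mul_ne_zero (mul_ne_zero
      (div_ne_zero (hxk (m+2) (by omega)) hε) (hpx (m+3))) (hpy (m+2)))
      (div_ne_zero (hyk (m+3) (by omega)) hε)
  have hom1 : Odd (m+1) := Even.add_one hm
  have hom3 : Odd (m+3) := by obtain ⟨t, ht⟩ := hm; exact ⟨t+1, by omega⟩
  have hem2 : Even (m+2) := by obtain ⟨t, ht⟩ := hm; exact ⟨t+1, by omega⟩
  have A1 : (-Real.exp ε)^(m+3) = -(Real.exp ε^(m+3)) := hom3.neg_pow _
  have A2 : (-Real.exp ε)^m = Real.exp ε^m := hm.neg_pow _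
  have A3 : (-Real.exp ε)^(m+1) = -(Real.exp ε^(m+1)) := hom1.neg_pow _
  have A4 : (-Real.exp ε)^(m+2) = Real.exp ε^(m+2) := hem2.neg_pow _
  have A5 : (-Real.exp ε)^(2*m) = Real.exp ε^(2*m) := (even_two_mul m).neg_pow _
  have A6 : (-Real.exp ε)^(2*(m+1)) = Real.exp ε^(2*(m+1)) := (even_two_mul (m+1)).neg_pow _
  have s1 : (-1:ℝ)^m = 1 := Even.neg_one_pow hm
  have s2 : (-1:ℝ)^(m+1) = -1 := Odd.neg_one_pow hom1
  have hQne : (-Real.exp ε)^(m*(m-1)/2) ≠ 0 := pow_ne_zero _ (neg_ne_zero.mpr hx.ne')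
  have hNne : qPoch (-Real.exp ε) ((-Real.exp ε)^3) m ≠ 0 := by
    apply qPoch_ne_zero; intro k hk
    apply one_sub_ne
    rw [← pow_add, abs_pow, abs_neg, abs_of_pos hx]
    exact pow_exp_ne_one hε (by omega)
  have hDne : qPoch (-Real.exp ε) (-Real.exp (β*ε) * (-Real.exp ε)^(m+3)) m ≠ 0 := by
    apply qPoch_ne_zero; intro k hk
    apply one_sub_ne
    rw [show (-Real.exp (β*ε) * (-Real.exp ε)^(m+3)) * (-Real.exp ε)^k
      = -(Real.exp (β*ε) * (-Real.exp ε)^(m+3+k)) from by rw [pow_add]; ring]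
    rw [abs_neg, abs_mul, abs_of_pos hy, abs_pow, abs_neg, abs_of_pos hx]
    exact exp_pow_ne_one hβ hε (by omega)
  have hNsucc : qPoch (-Real.exp ε) ((-Real.exp ε)^3) (m+1)
      = qPoch (-Real.exp ε) ((-Real.exp ε)^3) m * (1 + Real.exp ε^(m+3)) := by
    rw [qPoch_succ]; congr 1; rw [A2]; ring
  have hDsucc := qPoch_shift (-Real.exp ε) (-Real.exp (β*ε)) m
  have hD1eq : qPoch (-Real.exp ε) (-Real.exp (β*ε) * (-Real.exp ε)^(m+1+3)) (m+1)
      = qPoch (-Real.exp ε) (-Real.exp (β*ε) * (-Real.exp ε)^(m+3)) m *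
          (1 - Real.exp (β*ε) * Real.exp ε^(2*m+3)) *
          (1 + Real.exp (β*ε) * Real.exp ε^(2*m+4))
        / (1 - Real.exp (β*ε) * Real.exp ε^(m+3)) := by
    rw [show m+1+3 = m+4 from rfl]
    rw [eq_div_iff (hyk (m+3) (by omega))]
    have e1 : (1:ℝ) - -Real.exp (β*ε) * (-Real.exp ε)^(m+3)
        = 1 - Real.exp (β*ε)*Real.exp ε^(m+3) := by rw [A1]; ring
    have e2 : (1:ℝ) - -Real.exp (β*ε) * (-Real.exp ε)^(m+3) * (-Real.exp ε)^m
        = 1 - Real.exp (β*ε)*Real.exp ε^(2*m+3) := by rw [A1, A2]; ring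
    have e3 : (1:ℝ) - -Real.exp (β*ε) * (-Real.exp ε)^(m+3) * (-Real.exp ε)^(m+1)
        = 1 + Real.exp (β*ε)*Real.exp ε^(2*m+4) := by rw [A1, A3]; ring
    rw [e1, e2, e3] at hDsucc
    linear_combination hDsucc
  have hQ : (-Real.exp ε)^((m+1)*(m+1-1)/2)
      = (-Real.exp ε)^(m*(m-1)/2) * Real.exp ε^m := by
    rw [Nat.triangle_succ, pow_add, A2]
  have hAm : M - (-Real.exp ε) ^ (2 * m) * (1 - -Real.exp (β * ε) * (-Real.exp ε) ^ 3) *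
        qPoch (-Real.exp ε) (-Real.exp (β * ε) * -Real.exp ε) 2 *
        qPoch (-Real.exp ε) (-Real.exp ε) 2 /
      ((1 - (-Real.exp ε) ^ 2) * qPoch (-Real.exp ε) ((-Real.exp ε) ^ (m + 1)) 2 *
        qPoch (-Real.exp ε) (-Real.exp (β * ε) * (-Real.exp ε) ^ (m + 1)) 2)
      = (M * D0e β m ε - NAq β m ε) / D0e β m ε := by
    rw [qPoch_two, qPoch_two, qPoch_two, qPoch_two]
    unfold D0e NAq
    rw [A3, A5]
    have f1 : (1:ℝ) - -(Real.exp ε^(m+1)) ≠ 0 := by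
      rw [show (1:ℝ) - -(Real.exp ε^(m+1)) = 1 + Real.exp ε^(m+1) from by ring]
      exact hpx (m+1)
    have f2 : (1:ℝ) - -(Real.exp ε^(m+1)) * -Real.exp ε ≠ 0 := by
      rw [show (1:ℝ) - -(Real.exp ε^(m+1)) * -Real.exp ε = 1 - Real.exp ε^(m+2) from by ring]
      exact hxk (m+2) (by omega)
    have f3 : (1:ℝ) - -Real.exp (β*ε) * -(Real.exp ε^(m+1)) ≠ 0 := by
      rw [show (1:ℝ) - -Real.exp (β*ε) * -(Real.exp ε^(m+1))
        = 1 - Real.exp (β*ε) * Real.exp ε^(m+1) from by ring]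
      exact hyk (m+1) (by omega)
    have f4 : (1:ℝ) - -Real.exp (β*ε) * -(Real.exp ε^(m+1)) * -Real.exp ε ≠ 0 := by
      rw [show (1:ℝ) - -Real.exp (β*ε) * -(Real.exp ε^(m+1)) * -Real.exp ε
        = 1 + Real.exp (β*ε) * Real.exp ε^(m+2) from by ring]
      exact hpy (m+2)
    have f5 : (1:ℝ) - (-Real.exp ε)^2 ≠ 0 := by
      rw [show (1:ℝ) - (-Real.exp ε)^2 = 1 - Real.exp ε^2 from by ring]
      exact hxk 2 (by omega)
    have Qne : (1 - (-Real.exp ε) ^ 2) * ((1 - -(Real.exp ε ^ (m + 1))) *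
        (1 - -(Real.exp ε ^ (m + 1)) * -Real.exp ε)) *
        ((1 - -Real.exp (β * ε) * -(Real.exp ε ^ (m + 1))) *
        (1 - -Real.exp (β * ε) * -(Real.exp ε ^ (m + 1)) * -Real.exp ε)) ≠ 0 :=
      mul_ne_zero (mul_ne_zero f5 (mul_ne_zero f1 f2)) (mul_ne_zero f3 f4)
    have D0ne : (1 + Real.exp ε ^ (m + 1)) * ((1 - Real.exp ε ^ (m + 2)) / ε) *
        ((1 - Real.exp (β * ε) * Real.exp ε ^ (m + 1)) / ε) *
        (1 + Real.exp (β * ε) * Real.exp ε ^ (m + 2)) ≠ 0 :=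
      mul_ne_zero (mul_ne_zero (mul_ne_zero
        (hpx (m+1)) (div_ne_zero (hxk (m+2) (by omega)) hε))
        (div_ne_zero (hyk (m+1) (by omega)) hε)) (hpy (m+2))
    rw [sub_div' Qne, div_eq_div_iff Qne D0ne]
    field_simp
    ring
  have hAm1 : M - (-Real.exp ε) ^ (2 * (m+1)) * (1 - -Real.exp (β * ε) * (-Real.exp ε) ^ 3) *
        qPoch (-Real.exp ε) (-Real.exp (β * ε) * -Real.exp ε) 2 *
        qPoch (-Real.exp ε) (-Real.exp ε) 2 /
      ((1 - (-Real.exp ε) ^ 2) * qPoch (-Real.exp ε) ((-Real.exp ε) ^ (m + 1 + 1)) 2 *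
        qPoch (-Real.exp ε) (-Real.exp (β * ε) * (-Real.exp ε) ^ (m + 1 + 1)) 2)
      = (M * D1e β m ε - NAq β (m+1) ε) / D1e β m ε := by
    rw [show m+1+1 = m+2 from rfl]
    rw [qPoch_two, qPoch_two, qPoch_two, qPoch_two]
    unfold D1e NAq
    rw [A4, A6]
    have f1 : (1:ℝ) - Real.exp ε^(m+2) ≠ 0 := hxk (m+2) (by omega)
    have f2 : (1:ℝ) - Real.exp ε^(m+2) * -Real.exp ε ≠ 0 := by
      rw [show (1:ℝ) - Real.exp ε^(m+2) * -Real.exp ε = 1 + Real.exp ε^(m+3) from by ring]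
      exact hpx (m+3)
    have f3 : (1:ℝ) - -Real.exp (β*ε) * Real.exp ε^(m+2) ≠ 0 := by
      rw [show (1:ℝ) - -Real.exp (β*ε) * Real.exp ε^(m+2)
        = 1 + Real.exp (β*ε) * Real.exp ε^(m+2) from by ring]
      exact hpy (m+2)
    have f4 : (1:ℝ) - -Real.exp (β*ε) * Real.exp ε^(m+2) * -Real.exp ε ≠ 0 := by
      rw [show (1:ℝ) - -Real.exp (β*ε) * Real.exp ε^(m+2) * -Real.exp ε
        = 1 - Real.exp (β*ε) * Real.exp ε^(m+3) from by ring]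
      exact hyk (m+3) (by omega)
    have f5 : (1:ℝ) - (-Real.exp ε)^2 ≠ 0 := by
      rw [show (1:ℝ) - (-Real.exp ε)^2 = 1 - Real.exp ε^2 from by ring]
      exact hxk 2 (by omega)
    have Qne : (1 - (-Real.exp ε) ^ 2) * ((1 - Real.exp ε ^ (m + 2)) *
        (1 - Real.exp ε ^ (m + 2) * -Real.exp ε)) *
        ((1 - -Real.exp (β * ε) * Real.exp ε ^ (m + 2)) *
        (1 - -Real.exp (β * ε) * Real.exp ε ^ (m + 2) * -Real.exp ε)) ≠ 0 :=
      mul_ne_zero (mul_ne_zero f5 (mul_ne_zero f1 f2)) (mul_ne_zero f3 f4)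
    have D1ne : (1 - Real.exp ε ^ (m + 2)) / ε * (1 + Real.exp ε ^ (m + 3)) *
        (1 + Real.exp (β * ε) * Real.exp ε ^ (m + 2)) *
        ((1 - Real.exp (β * ε) * Real.exp ε ^ (m + 3)) / ε) ≠ 0 :=
      mul_ne_zero (mul_ne_zero (mul_ne_zero
        (div_ne_zero f1 hε) (hpx (m+3))) (hpy (m+2)))
        (div_ne_zero (hyk (m+3) (by omega)) hε)
    rw [sub_div' Qne, div_eq_div_iff Qne D1ne]
    field_simp
    ring
  have hYne : ((1 - Real.exp (β*ε) * Real.exp ε ^ (2*m+3))/ε) *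
      (1 + Real.exp (β*ε) * Real.exp ε ^ (2*m+4)) * D1e β m ε *
      (M * D0e β m ε - NAq β m ε) ≠ 0 :=
    mul_ne_zero (mul_ne_zero (mul_ne_zero
      (div_ne_zero (hyk (2*m+3) (by omega)) hε) (hpy (2*m+4))) hD1ne) hP0
  have hΦ0ne : Phi β M m ε ≠ 0 := by
    unfold Phi
    rw [hAm, s1]
    exact mul_ne_zero (mul_ne_zero (mul_ne_zero one_ne_zero hQne)
      (div_ne_zero hNne hDne)) (div_ne_zero hP0 hD0ne)
  rw [div_eq_div_iff hΦ0ne hYne]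
  unfold Phi
  rw [hNsucc, hD1eq, hQ, hAm, hAm1, s1, s2]
  have hDne' : qPoch (-Real.exp ε) (-(Real.exp (β*ε) * (-Real.exp ε)^(m+3))) m ≠ 0 := by
    rw [show -(Real.exp (β*ε) * (-Real.exp ε)^(m+3))
      = -Real.exp (β*ε) * (-Real.exp ε)^(m+3) from by ring]
    exact hDne
  field_simp [hε, hyk (m+3) (by omega), hD0ne, hD1ne, hDne]
  rw [neg_inj, div_eq_iff (hyk (2*m+3) (by omega))]
  ring

lemma tendsto_NAq (β : ℝ) (j : ℕ) : Tendsto (NAq β j) l (nhds (4*(β+1)*(β+3))) := by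
  have h := ((((TA (2*j)).mul (T1A 1)).mul (TSb β 1)).mul
      (T1B β 2)).mul (TSb β 3)
  rw [show (4*(β+1)*(β+3) : ℝ)
      = 1 * 2 * (-(β+((1:ℕ):ℝ))) * 2 * (-(β+((3:ℕ):ℝ))) from by push_cast; ring]
  exact h

lemma tendsto_D0o (β : ℝ) (m : ℕ) :
    Tendsto (D0o β m) l (nhds (4*((m:ℝ)+1)*(β+(m:ℝ)+2))) := by
  have h := (((TSq (m+1)).mul (T1A (m+2))).mul
      (T1B β (m+1))).mul (TSb β (m+2))
  rw [show (4*((m:ℝ)+1)*(β+(m:ℝ)+2) : ℝ)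
      = -(((m+1:ℕ)):ℝ) * 2 * 2 * (-(β+((m+2:ℕ):ℝ))) from by push_cast; ring]
  exact h

lemma tendsto_D1o (β : ℝ) (m : ℕ) :
    Tendsto (D1o β m) l (nhds (4*((m:ℝ)+3)*(β+(m:ℝ)+2))) := by
  have h := (((T1A (m+2)).mul (TSq (m+3))).mul
      (TSb β (m+2))).mul (T1B β (m+3))
  rw [show (4*((m:ℝ)+3)*(β+(m:ℝ)+2) : ℝ)
      = 2 * (-(((m+3:ℕ)):ℝ)) * (-(β+((m+2:ℕ):ℝ))) * 2 from by push_cast; ring]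
  exact h

lemma tendsto_D0e (β : ℝ) (m : ℕ) :
    Tendsto (D0e β m) l (nhds (4*((m:ℝ)+2)*(β+(m:ℝ)+1))) := by
  have h := (((T1A (m+1)).mul (TSq (m+2))).mul
      (TSb β (m+1))).mul (T1B β (m+2))
  rw [show (4*((m:ℝ)+2)*(β+(m:ℝ)+1) : ℝ)
      = 2 * (-(((m+2:ℕ)):ℝ)) * (-(β+((m+1:ℕ):ℝ))) * 2 from by push_cast; ring]
  exact h

lemma tendsto_D1e (β : ℝ) (m : ℕ) :
    Tendsto (D1e β m) l (nhds (4*((m:ℝ)+2)*(β+(m:ℝ)+3))) := by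
  have h := (((TSq (m+2)).mul (T1A (m+3))).mul
      (T1B β (m+2))).mul (TSb β (m+3))
  rw [show (4*((m:ℝ)+2)*(β+(m:ℝ)+3) : ℝ)
      = -(((m+2:ℕ)):ℝ) * 2 * 2 * (-(β+((m+3:ℕ):ℝ))) from by push_cast; ring]
  exact h

theorem aux_odd (β M : ℝ) (hβ : -1 < β) (m : ℕ) (hm : Odd m)
    (hP : M * (((m:ℝ)+1) * (β+(m:ℝ)+2)) - (β+1)*(β+3) ≠ 0) :
    Tendsto (fun ε => Phi β M (m+1) ε / Phi β M m ε) l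
      (nhds ((((m+1:ℕ):ℝ) + 2) / (2 * ((m+1:ℕ):ℝ) + 1 + β) *
        ((M - (3 + β) * (1 + β) / ((((m+1:ℕ):ℝ) + 2) * (((m+1:ℕ):ℝ) + 1 + β))) /
          (M - (3 + β) * (1 + β) / (((m+1:ℕ):ℝ) * (((m+1:ℕ):ℝ) + 1 + β)))))) := by
  have hm0 : (0:ℝ) ≤ (m:ℝ) := Nat.cast_nonneg m
  have hP0L : (M * (4*((m:ℝ)+1)*(β+(m:ℝ)+2)) - 4*(β+1)*(β+3)) ≠ 0 := by
    intro h; apply hP; linear_combination h / 4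
  have hTP0 : Tendsto (fun ε => M * D0o β m ε - NAq β m ε) l
      (nhds (M * (4*((m:ℝ)+1)*(β+(m:ℝ)+2)) - 4*(β+1)*(β+3))) :=
    ((tendsto_D0o β m).const_mul M).sub (tendsto_NAq β m)
  have hX : Tendsto (fun ε => Real.exp ε ^ m * ((1 - Real.exp ε ^ (m+3))/ε) *
      (1 + Real.exp (β*ε) * Real.exp ε ^ (m+3)) *
      (M * D1o β m ε - NAq β (m+1) ε) * D0o β m ε) l
      (nhds (1 * (-((m+3:ℕ):ℝ)) * 2 *
        (M * (4*((m:ℝ)+3)*(β+(m:ℝ)+2)) - 4*(β+1)*(β+3)) * (4*((m:ℝ)+1)*(β+(m:ℝ)+2)))) :=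
    ((((TA m).mul (TSq (m+3))).mul (T1B β (m+3))).mul
      (((tendsto_D1o β m).const_mul M).sub (tendsto_NAq β (m+1)))).mul (tendsto_D0o β m)
  have hY : Tendsto (fun ε => ((1 - Real.exp (β*ε) * Real.exp ε ^ (2*m+3))/ε) *
      (1 + Real.exp (β*ε) * Real.exp ε ^ (2*m+4)) * D1o β m ε *
      (M * D0o β m ε - NAq β m ε)) l
      (nhds ((-(β+((2*m+3:ℕ):ℝ))) * 2 * (4*((m:ℝ)+3)*(β+(m:ℝ)+2)) *
        (M * (4*((m:ℝ)+1)*(β+(m:ℝ)+2)) - 4*(β+1)*(β+3)))) :=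
    (((TSb β (2*m+3)).mul (T1B β (2*m+4))).mul (tendsto_D1o β m)).mul hTP0
  have c1 : (0:ℝ) < β + ((2*m+3:ℕ):ℝ) := by push_cast; linarith
  have c2 : (0:ℝ) < 4*((m:ℝ)+3)*(β+(m:ℝ)+2) := by nlinarith
  have hYne : ((-(β+((2*m+3:ℕ):ℝ))) * 2 * (4*((m:ℝ)+3)*(β+(m:ℝ)+2)) *
      (M * (4*((m:ℝ)+1)*(β+(m:ℝ)+2)) - 4*(β+1)*(β+3))) ≠ 0 :=
    mul_ne_zero (mul_ne_zero (mul_ne_zero (neg_ne_zero.mpr c1.ne') two_ne_zero) c2.ne') hP0L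
  have hT := hX.div hY hYne
  have h0 : ∀ᶠ ε in l, ε ≠ 0 := by
    filter_upwards [self_mem_nhdsWithin] with ε hε using hε
  have hPev : ∀ᶠ ε in l, M * D0o β m ε - NAq β m ε ≠ 0 := hTP0.eventually_ne hP0L
  have hEE : ∀ᶠ ε in l, (Real.exp ε ^ m * ((1 - Real.exp ε ^ (m+3))/ε) *
      (1 + Real.exp (β*ε) * Real.exp ε ^ (m+3)) *
      (M * D1o β m ε - NAq β (m+1) ε) * D0o β m ε) /
      (((1 - Real.exp (β*ε) * Real.exp ε ^ (2*m+3))/ε) *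
      (1 + Real.exp (β*ε) * Real.exp ε ^ (2*m+4)) * D1o β m ε *
      (M * D0o β m ε - NAq β m ε)) = Phi β M (m+1) ε / Phi β M m ε := by
    filter_upwards [h0, hPev] with ε h1 h2
    exact (pointwise_odd β M hβ m hm h1 h2).symm
  have hres := hT.congr' hEE
  have hval : (((m+1:ℕ):ℝ) + 2) / (2 * ((m+1:ℕ):ℝ) + 1 + β) *
        ((M - (3 + β) * (1 + β) / ((((m+1:ℕ):ℝ) + 2) * (((m+1:ℕ):ℝ) + 1 + β))) /
          (M - (3 + β) * (1 + β) / (((m+1:ℕ):ℝ) * (((m+1:ℕ):ℝ) + 1 + β)))) =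
      (1 * (-((m+3:ℕ):ℝ)) * 2 *
        (M * (4*((m:ℝ)+3)*(β+(m:ℝ)+2)) - 4*(β+1)*(β+3)) * (4*((m:ℝ)+1)*(β+(m:ℝ)+2))) /
      ((-(β+((2*m+3:ℕ):ℝ))) * 2 * (4*((m:ℝ)+3)*(β+(m:ℝ)+2)) *
        (M * (4*((m:ℝ)+1)*(β+(m:ℝ)+2)) - 4*(β+1)*(β+3))) := by
    have q2 : ((((m:ℝ)+1)+2) * (((m:ℝ)+1)+1+β)) ≠ 0 := by nlinarith
    have q1 : (((m:ℝ)+1) * (((m:ℝ)+1)+1+β)) ≠ 0 := by nlinarith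
    have e5 : (2*((m:ℝ)+1)+1+β) ≠ 0 := by intro h; nlinarith
    have hB : M * (((m:ℝ)+1)*(((m:ℝ)+1)+1+β)) - (3+β)*(1+β) ≠ 0 := by
      intro h; apply hP; linear_combination h
    rw [eq_div_iff hYne]
    push_cast
    rw [sub_div' q2, sub_div' q1]
    rw [div_div_div_eq, div_mul_div_comm, div_mul_eq_mul_div,
      div_eq_iff (mul_ne_zero e5 (mul_ne_zero q2 hB))]
    ring
  rw [hval]
  exact hres

theorem aux_even (β M : ℝ) (hβ : -1 < β) (m : ℕ) (hm : Even m)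
    (hP : M * (((m:ℝ)+2) * (β+(m:ℝ)+1)) - (β+1)*(β+3) ≠ 0) :
    Tendsto (fun ε => Phi β M (m+1) ε / Phi β M m ε) l
      (nhds (-((((m+1:ℕ):ℝ) + 2 + β) / (2 * ((m+1:ℕ):ℝ) + 1 + β)) *
        ((M - (3 + β) * (1 + β) / ((((m+1:ℕ):ℝ) + 1) * (((m+1:ℕ):ℝ) + 2 + β))) /
          (M - (3 + β) * (1 + β) / ((((m+1:ℕ):ℝ) + 1) * (((m+1:ℕ):ℝ) + β)))))) := by
  have hm0 : (0:ℝ) ≤ (m:ℝ) := Nat.cast_nonneg m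
  have hP0L : (M * (4*((m:ℝ)+2)*(β+(m:ℝ)+1)) - 4*(β+1)*(β+3)) ≠ 0 := by
    intro h; apply hP; linear_combination h / 4
  have hTP0 : Tendsto (fun ε => M * D0e β m ε - NAq β m ε) l
      (nhds (M * (4*((m:ℝ)+2)*(β+(m:ℝ)+1)) - 4*(β+1)*(β+3))) :=
    ((tendsto_D0e β m).const_mul M).sub (tendsto_NAq β m)
  have hX : Tendsto (fun ε => -(Real.exp ε ^ m) * (1 + Real.exp ε ^ (m+3)) *
      ((1 - Real.exp (β*ε) * Real.exp ε ^ (m+3))/ε) *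
      (M * D1e β m ε - NAq β (m+1) ε) * D0e β m ε) l
      (nhds (-1 * 2 * (-(β+((m+3:ℕ):ℝ))) *
        (M * (4*((m:ℝ)+2)*(β+(m:ℝ)+3)) - 4*(β+1)*(β+3)) * (4*((m:ℝ)+2)*(β+(m:ℝ)+1)))) :=
    ((((TA m).neg.mul (T1A (m+3))).mul (TSb β (m+3))).mul
      (((tendsto_D1e β m).const_mul M).sub (tendsto_NAq β (m+1)))).mul (tendsto_D0e β m)
  have hY : Tendsto (fun ε => ((1 - Real.exp (β*ε) * Real.exp ε ^ (2*m+3))/ε) *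
      (1 + Real.exp (β*ε) * Real.exp ε ^ (2*m+4)) * D1e β m ε *
      (M * D0e β m ε - NAq β m ε)) l
      (nhds ((-(β+((2*m+3:ℕ):ℝ))) * 2 * (4*((m:ℝ)+2)*(β+(m:ℝ)+3)) *
        (M * (4*((m:ℝ)+2)*(β+(m:ℝ)+1)) - 4*(β+1)*(β+3)))) :=
    (((TSb β (2*m+3)).mul (T1B β (2*m+4))).mul (tendsto_D1e β m)).mul hTP0
  have c1 : (0:ℝ) < β + ((2*m+3:ℕ):ℝ) := by push_cast; linarith
  have c2 : (0:ℝ) < 4*((m:ℝ)+2)*(β+(m:ℝ)+3) := by nlinarith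
  have hYne : ((-(β+((2*m+3:ℕ):ℝ))) * 2 * (4*((m:ℝ)+2)*(β+(m:ℝ)+3)) *
      (M * (4*((m:ℝ)+2)*(β+(m:ℝ)+1)) - 4*(β+1)*(β+3))) ≠ 0 :=
    mul_ne_zero (mul_ne_zero (mul_ne_zero (neg_ne_zero.mpr c1.ne') two_ne_zero) c2.ne') hP0L
  have hT := hX.div hY hYne
  have h0 : ∀ᶠ ε in l, ε ≠ 0 := by
    filter_upwards [self_mem_nhdsWithin] with ε hε using hε
  have hPev : ∀ᶠ ε in l, M * D0e β m ε - NAq β m ε ≠ 0 := hTP0.eventually_ne hP0L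
  have hEE : ∀ᶠ ε in l, (-(Real.exp ε ^ m) * (1 + Real.exp ε ^ (m+3)) *
      ((1 - Real.exp (β*ε) * Real.exp ε ^ (m+3))/ε) *
      (M * D1e β m ε - NAq β (m+1) ε) * D0e β m ε) /
      (((1 - Real.exp (β*ε) * Real.exp ε ^ (2*m+3))/ε) *
      (1 + Real.exp (β*ε) * Real.exp ε ^ (2*m+4)) * D1e β m ε *
      (M * D0e β m ε - NAq β m ε)) = Phi β M (m+1) ε / Phi β M m ε := by
    filter_upwards [h0, hPev] with ε h1 h2
    exact (pointwise_even β M hβ m hm h1 h2).symm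
  have hres := hT.congr' hEE
  have hval : -((((m+1:ℕ):ℝ) + 2 + β) / (2 * ((m+1:ℕ):ℝ) + 1 + β)) *
        ((M - (3 + β) * (1 + β) / ((((m+1:ℕ):ℝ) + 1) * (((m+1:ℕ):ℝ) + 2 + β))) /
          (M - (3 + β) * (1 + β) / ((((m+1:ℕ):ℝ) + 1) * (((m+1:ℕ):ℝ) + β)))) =
      (-1 * 2 * (-(β+((m+3:ℕ):ℝ))) *
        (M * (4*((m:ℝ)+2)*(β+(m:ℝ)+3)) - 4*(β+1)*(β+3)) * (4*((m:ℝ)+2)*(β+(m:ℝ)+1))) /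
      ((-(β+((2*m+3:ℕ):ℝ))) * 2 * (4*((m:ℝ)+2)*(β+(m:ℝ)+3)) *
        (M * (4*((m:ℝ)+2)*(β+(m:ℝ)+1)) - 4*(β+1)*(β+3))) := by
    have q2 : ((((m:ℝ)+1)+1) * (((m:ℝ)+1)+2+β)) ≠ 0 := by nlinarith
    have q1 : ((((m:ℝ)+1)+1) * (((m:ℝ)+1)+β)) ≠ 0 := by nlinarith
    have e5 : (2*((m:ℝ)+1)+1+β) ≠ 0 := by intro h; nlinarith
    have hB : M * ((((m:ℝ)+1)+1)*(((m:ℝ)+1)+β)) - (3+β)*(1+β) ≠ 0 := by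
      intro h; apply hP; linear_combination h
    rw [eq_div_iff hYne]
    push_cast
    rw [sub_div' q2, sub_div' q1]
    rw [div_div_div_eq, ← neg_div, div_mul_div_comm, div_mul_eq_mul_div,
      div_eq_iff (mul_ne_zero e5 (mul_ne_zero q2 hB))]
    ring
  rw [hval]
  exact hres

/-- `q → −1` limit of the Geronimus transformation coefficient `B_n = Φ_n/Φ_{n−1}`
for the little q-Jacobi polynomials with `a = q²`, where
`Φ_m = (−1)^m q^{m(m−1)/2} ((q³;q)_m/(bq^{m+3};q)_m)
 (M − q^{2m}(1−bq³)(bq;q)_2(q;q)_2/((1−q²)(q^{m+1};q)_2(bq^{m+1};q)_2))`: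
under `q = −e^ε`, `b = −e^{βε}` (with the nonvanishing conditions on `M` for
`m ∈ {n−1,n,n+1}` as needed so that all denominators below are nonzero), `B_n` tends to
`((n+2)/(2n+1+β)) (M−(3+β)(1+β)/((n+2)(n+1+β)))/(M−(3+β)(1+β)/(n(n+1+β)))` for even `n`
and `−((n+2+β)/(2n+1+β)) (M−(3+β)(1+β)/((n+1)(n+2+β)))/(M−(3+β)(1+β)/((n+1)(n+β)))`
for odd `n`. -/
theorem Bn_limit (β M : ℝ) (hβ : -1 < β) (n : ℕ) (hn : 1 ≤ n)
    (hM : ∀ m : ℕ, (m = n - 1 ∨ m = n ∨ m = n + 1) →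
      (Even m → 1 ≤ m → M ≠ (3 + β) * (1 + β) / ((m : ℝ) * (m + 1 + β))) ∧
      (Odd m → M ≠ (3 + β) * (1 + β) / (((m : ℝ) + 1) * (m + β)))) :
    Filter.Tendsto
      (fun ε : ℝ =>
        let q : ℝ := -Real.exp ε
        let b : ℝ := -Real.exp (β * ε)
        let Φ : ℕ → ℝ := fun m =>
          (-1) ^ m * q ^ (m * (m - 1) / 2) *
            (qPoch q (q ^ 3) m / qPoch q (b * q ^ (m + 3)) m) *
            (M - q ^ (2 * m) * (1 - b * q ^ 3) * qPoch q (b * q) 2 * qPoch q q 2 /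
              ((1 - q ^ 2) * qPoch q (q ^ (m + 1)) 2 * qPoch q (b * q ^ (m + 1)) 2))
        Φ n / Φ (n - 1))
      (nhdsWithin 0 ({0}ᶜ : Set ℝ))
      (nhds (if Even n then
          ((n : ℝ) + 2) / (2 * n + 1 + β) *
            ((M - (3 + β) * (1 + β) / (((n : ℝ) + 2) * (n + 1 + β))) /
              (M - (3 + β) * (1 + β) / ((n : ℝ) * (n + 1 + β))))
        else
          -(((n : ℝ) + 2 + β) / (2 * n + 1 + β)) *
            ((M - (3 + β) * (1 + β) / (((n : ℝ) + 1) * (n + 2 + β))) /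
              (M - (3 + β) * (1 + β) / (((n : ℝ) + 1) * (n + β)))))) := by
  obtain ⟨m, rfl⟩ : ∃ m, n = m + 1 := ⟨n-1, by omega⟩
  have hm0 : (0:ℝ) ≤ (m:ℝ) := Nat.cast_nonneg m
  have hfun : (fun ε : ℝ =>
        let q : ℝ := -Real.exp ε
        let b : ℝ := -Real.exp (β * ε)
        let Φ : ℕ → ℝ := fun j =>
          (-1) ^ j * q ^ (j * (j - 1) / 2) *
            (qPoch q (q ^ 3) j / qPoch q (b * q ^ (j + 3)) j) *
            (M - q ^ (2 * j) * (1 - b * q ^ 3) * qPoch q (b * q) 2 * qPoch q q 2 /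
              ((1 - q ^ 2) * qPoch q (q ^ (j + 1)) 2 * qPoch q (b * q ^ (j + 1)) 2))
        Φ (m+1) / Φ (m+1-1))
      = fun ε => Phi β M (m+1) ε / Phi β M m ε := by
    funext ε
    rfl
  rw [hfun]
  rcases Nat.even_or_odd m with hme | hmo
  · -- n = m+1 odd
    rw [if_neg (by simp [Nat.even_add_one, hme])]
    have hOdd : Odd (m+1) := Even.add_one hme
    have hne := (hM (m+1) (Or.inr (Or.inl rfl))).2 hOdd
    have hP : M * (((m:ℝ)+2) * (β+(m:ℝ)+1)) - (β+1)*(β+3) ≠ 0 := by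
      intro h
      apply hne
      have hd : ((((m+1:ℕ):ℝ)) + 1) * (((m+1:ℕ):ℝ) + β) ≠ 0 := by push_cast; nlinarith
      rw [eq_div_iff hd]
      push_cast
      linear_combination h
    exact aux_even β M hβ m hme hP
  · rw [if_pos (Odd.add_one hmo)]
    have hne := (hM (m+1) (Or.inr (Or.inl rfl))).1 (Odd.add_one hmo) (by omega)
    have hP : M * (((m:ℝ)+1) * (β+(m:ℝ)+2)) - (β+1)*(β+3) ≠ 0 := by
      intro h
      apply hne
      have hd : (((m+1:ℕ):ℝ)) * (((m+1:ℕ):ℝ) + 1 + β) ≠ 0 := by push_cast; nlinarith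
      rw [eq_div_iff hd]
      push_cast
      linear_combination h
    exact aux_odd β M hβ m hmo hP
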